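/- Let V_1, …, V_k be complex n × n matrices, let Φ(a) = Σ_{r=1}^k V_rᴴ * a * V_r, and let ρ ∈ Matrix n n ℂ be positive definite such that Φ(ρ) = Σ_r V_rᴴ * ρ * V_r is positive definite. Let c ∈ Matrix n n ℂ and set d := ρ^{1/2} * c * ρ^{-1/2}. Assume d = Φ(ρ)^{1/2} * c * Φ(ρ)^{-1/2} and that d commutes with V_rᴴ for every r. Then the modified error map Φ_ρ leaves c invariant: Φ(ρ)^{-1/2} * Φ(ρ^{1/2} * c * ρ^{1/2}) * Φ(ρ)^{-1/2} = c. -/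

import Mathlib

open Matrix
open scoped ComplexOrder

/-- The positive semidefinite square root of a positive semidefinite matrix (the definition
that Mathlib had in December 2024, since removed). -/
noncomputable def Matrix.PosSemidef.sqrt {n 𝕜 : Type*} [Fintype n] [DecidableEq n] [RCLike 𝕜]
    {A : Matrix n n 𝕜} (hA : A.PosSemidef) : Matrix n n 𝕜 :=
  hA.1.eigenvectorUnitary.1 * diagonal ((↑) ∘ (√·) ∘ hA.1.eigenvalues) *
  (star hA.1.eigenvectorUnitary : Matrix n n 𝕜)

lemma Matrix.PosSemidef.sqrt_mul_self {n 𝕜 : Type*} [Fintype n] [DecidableEq n] [RCLike 𝕜]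
    {A : Matrix n n 𝕜} (hA : A.PosSemidef) : hA.sqrt * hA.sqrt = A := by
  have hU : (star hA.1.eigenvectorUnitary : Matrix n n 𝕜) * hA.1.eigenvectorUnitary.1 = 1 :=
    Unitary.coe_star_mul_self _
  have hD : diagonal (((↑) ∘ (√·) ∘ hA.1.eigenvalues : n → 𝕜)) *
      diagonal ((↑) ∘ (√·) ∘ hA.1.eigenvalues) = diagonal (RCLike.ofReal ∘ hA.1.eigenvalues) := by
    rw [diagonal_mul_diagonal]
    congr 1
    funext i
    simp only [Function.comp_apply]
    rw [← RCLike.ofReal_mul, Real.mul_self_sqrt (hA.eigenvalues_nonneg i)]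
  conv_rhs => rw [hA.1.spectral_theorem, Unitary.conjStarAlgAut_apply]
  simp only [Matrix.PosSemidef.sqrt]
  calc _ = hA.1.eigenvectorUnitary.1 * diagonal ((↑) ∘ (√·) ∘ hA.1.eigenvalues) *
        ((star hA.1.eigenvectorUnitary : Matrix n n 𝕜) * hA.1.eigenvectorUnitary.1) *
        diagonal ((↑) ∘ (√·) ∘ hA.1.eigenvalues) * (star hA.1.eigenvectorUnitary : Matrix n n 𝕜) := by
          simp only [Matrix.mul_assoc]
    _ = _ := by rw [hU, Matrix.mul_one, Matrix.mul_assoc _ (diagonal _) (diagonal _), hD]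

lemma Matrix.PosSemidef.sq_sqrt {n 𝕜 : Type*} [Fintype n] [DecidableEq n] [RCLike 𝕜]
    {A : Matrix n n 𝕜} (hA : A.PosSemidef) : hA.sqrt ^ 2 = A := by
  rw [sq, hA.sqrt_mul_self]

lemma sqrt_isUnit {m : ℕ} {A : Matrix (Fin m) (Fin m) ℂ} (hA : A.PosDef) :
    IsUnit hA.posSemidef.sqrt := by
  rw [Matrix.isUnit_iff_isUnit_det]
  have h2 : hA.posSemidef.sqrt.det ^ 2 = A.det := by
    rw [← Matrix.det_pow, hA.posSemidef.sq_sqrt]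
  have : A.det ≠ 0 := hA.det_pos.ne'
  exact isUnit_iff_ne_zero.2 (fun h => this (by rw [← h2, h]; ring))

/-- Passive error correction: if `d = ρ^{1/2} c ρ^{-1/2} = Φ(ρ)^{1/2} c Φ(ρ)^{-1/2}`
commutes with every `V_rᴴ`, then the modified error map
`Φ_ρ(a) = Φ(ρ)^{-1/2} Φ(ρ^{1/2} a ρ^{1/2}) Φ(ρ)^{-1/2}` leaves `c` invariant. -/
theorem modified_error_map_leaves_invariant
    {n k : ℕ} (V : Fin k → Matrix (Fin n) (Fin n) ℂ)
    (ρ : Matrix (Fin n) (Fin n) ℂ) (hρ : ρ.PosDef)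
    (hΦρ : (∑ r, (V r)ᴴ * ρ * V r).PosDef)
    (c : Matrix (Fin n) (Fin n) ℂ)
    (hd1 : hρ.posSemidef.sqrt * c * (hρ.posSemidef.sqrt)⁻¹ =
      hΦρ.posSemidef.sqrt * c * (hΦρ.posSemidef.sqrt)⁻¹)
    (hd2 : ∀ r, (hρ.posSemidef.sqrt * c * (hρ.posSemidef.sqrt)⁻¹) * (V r)ᴴ =
      (V r)ᴴ * (hρ.posSemidef.sqrt * c * (hρ.posSemidef.sqrt)⁻¹)) :
    (hΦρ.posSemidef.sqrt)⁻¹ *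
        (∑ r, (V r)ᴴ * (hρ.posSemidef.sqrt * c * hρ.posSemidef.sqrt) * V r) *
        (hΦρ.posSemidef.sqrt)⁻¹ = c := by
  set S := hρ.posSemidef.sqrt with hS
  set T := hΦρ.posSemidef.sqrt with hT
  have hSu : IsUnit S := sqrt_isUnit hρ
  have hTu : IsUnit T := sqrt_isUnit hΦρ
  set d := S * c * S⁻¹ with hdef
  have hSinv : S⁻¹ * S = 1 := Matrix.nonsing_inv_mul _ (Matrix.isUnit_iff_isUnit_det _ |>.1 hSu)
  have hScS : S * c * S = d * ρ := by
    have : d * ρ = S * c * (S⁻¹ * S) * S := by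
      rw [hdef, ← hρ.posSemidef.sqrt_mul_self, ← hS]; noncomm_ring
    rw [this, hSinv, Matrix.mul_one]
  have key : ∀ r, (V r)ᴴ * (S * c * S) * V r = d * ((V r)ᴴ * ρ * V r) := by
    intro r
    rw [hScS]
    calc (V r)ᴴ * (d * ρ) * V r = (V r)ᴴ * d * ρ * V r := by noncomm_ring
    _ = d * (V r)ᴴ * ρ * V r := by rw [← hd2 r]
    _ = d * ((V r)ᴴ * ρ * V r) := by noncomm_ring
  have hsum : (∑ r, (V r)ᴴ * (S * c * S) * V r) = d * (∑ r, (V r)ᴴ * ρ * V r) := by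
    rw [Finset.mul_sum]
    exact Finset.sum_congr rfl (fun r _ => key r)
  rw [hsum, ← hΦρ.posSemidef.sqrt_mul_self, ← hT, hd1]
  have hTinv : T⁻¹ * T = 1 := Matrix.nonsing_inv_mul _ (Matrix.isUnit_iff_isUnit_det _ |>.1 hTu)
  have hTinv' : T * T⁻¹ = 1 := Matrix.mul_nonsing_inv _ (Matrix.isUnit_iff_isUnit_det _ |>.1 hTu)
  calc T⁻¹ * (T * c * T⁻¹ * (T * T)) * T⁻¹
      = (T⁻¹ * T) * c * (T⁻¹ * T) * (T * T⁻¹) := by noncomm_ring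
    _ = c := by rw [hTinv, hTinv']; simp
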